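/- For every k ≥ 1, the Möbius transformation (PM)^{k+1}(MP)^k sends ∞ to 2k + 2 + 1/(2k), where P: x ↦ 1 + 1/x and M: x ↦ 1/(1+x). -/
import Mathlib


/-- The matrix of the Möbius transformation `P : x ↦ 1 + 1/x`. -/
def Pm : Matrix (Fin 2) (Fin 2) ℤ := !![1, 1; 1, 0]

/-- The matrix of the Möbius transformation `M : x ↦ 1/(1+x)`. -/
def Mm : Matrix (Fin 2) (Fin 2) ℤ := !![0, 1; 1, 1]

/-- The image `G(∞)` of the point at infinity under the fractional linear
transformation with matrix `A`, namely `A₀₀ / A₁₀`. -/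
def mobInf (A : Matrix (Fin 2) (Fin 2) ℤ) : ℚ := (A 0 0 : ℚ) / (A 1 0)

lemma pmPow (n : ℕ) : (Pm * Mm) ^ n = !![1, (2 * n : ℤ); 0, 1] := by
  induction n with
  | zero => simp [Matrix.one_fin_two]
  | succ n ih =>
    rw [pow_succ, ih]
    simp [Pm, Mm, Matrix.mul_fin_two]
    ring

lemma mpPow (n : ℕ) : (Mm * Pm) ^ n = !![1, 0; (2 * n : ℤ), 1] := by
  induction n with
  | zero => simp [Matrix.one_fin_two]
  | succ n ih =>
    rw [pow_succ, ih]
    simp [Pm, Mm, Matrix.mul_fin_two]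
    ring

/-- For every `k ≥ 1`, `(PM)^(k+1) (MP)^k (∞) = 2k + 2 + 1/(2k)`. -/
theorem stevedore_fraction (k : ℕ) (hk : 1 ≤ k) :
    mobInf ((Pm * Mm) ^ (k + 1) * (Mm * Pm) ^ k) =
      2 * (k : ℚ) + 2 + 1 / (2 * (k : ℚ)) := by
  rw [pmPow, mpPow]
  have hk' : (k : ℚ) ≠ 0 := by positivity
  simp [mobInf, Matrix.mul_fin_two]
  field_simp
  ring
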